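/- Let R_1, ..., R_K be positive reals and a_1, ..., a_K nonnegative reals with A_n = a_{n+1} + ... + a_K. If A_n > 2^{-(R_1+...+R_n)} for all n = 1, ..., K-1, and additionally a_1 - (2^{R_1}-1)A_1 > 0, then a_1 + A_1 > 1, contradicting the power constraint a_1 + ... + a_K ≤ 1. -/

import Mathlib

theorem stmt_2 (K : ℕ) (hK : 2 ≤ K) (R a : ℕ → ℝ)
    (hR : ∀ n ∈ Finset.Icc 1 K, 0 < R n)
    (ha : ∀ n ∈ Finset.Icc 1 K, 0 ≤ a n)
    (hA : ∀ n ∈ Finset.Icc 1 (K - 1), (∑ l ∈ Finset.Icc (n + 1) K, a l) >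
      (2 : ℝ) ^ (-(∑ l ∈ Finset.Icc 1 n, R l)))
    (hpos : a 1 - ((2 : ℝ) ^ (R 1) - 1) * (∑ l ∈ Finset.Icc 2 K, a l) > 0) :
    a 1 + (∑ l ∈ Finset.Icc 2 K, a l) > 1 := by
  have h1 : (1 : ℕ) ∈ Finset.Icc 1 (K - 1) := by
    simp [Finset.mem_Icc]; omega
  have hA1 := hA 1 h1
  simp [Finset.Icc_self] at hA1
  have hp : (0:ℝ) < (2:ℝ) ^ (R 1) := Real.rpow_pos_of_pos (by norm_num) _
  have key : (2:ℝ) ^ (R 1) * (∑ l ∈ Finset.Icc 2 K, a l) > 1 := by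
    have := mul_lt_mul_of_pos_left hA1 hp
    calc (1:ℝ) = (2:ℝ) ^ (R 1) * (2:ℝ) ^ (-(R 1)) := by
          rw [← Real.rpow_add (by norm_num)]; simp
      _ < _ := this
  nlinarith [key, hpos]
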